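/- On a singular arc of the plant problem where λ₂ = -1/x₂ and λ₂' = 1/x₂, the reproductive state satisfies x₂' = x₂, and consequently 1 - u(t) = x₂(t)/x₁(t) on the singular interval. -/

import Mathlib

/-- On the singular arc of the plant problem, where λ₂ = -1/x₂ and λ₂' = 1/x₂,
the reproductive state satisfies x₂' = x₂, and 1 - u = x₂/x₁. -/
theorem plant_singular_state (a b : ℝ) (x₁ x₂ lam2 u : ℝ → ℝ)
    (hx1 : ∀ t ∈ Set.Ioo a b, x₁ t ≠ 0)
    (hx2 : ∀ t ∈ Set.Ioo a b, x₂ t ≠ 0)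
    (hl2 : ∀ t ∈ Set.Ioo a b, HasDerivAt lam2 (1 / x₂ t) t)
    (hx2' : ∀ t ∈ Set.Ioo a b, HasDerivAt x₂ ((1 - u t) * x₁ t) t)
    (hlam : ∀ t ∈ Set.Ioo a b, lam2 t = -1 / x₂ t) :
    ∀ t ∈ Set.Ioo a b, HasDerivAt x₂ (x₂ t) t ∧ 1 - u t = x₂ t / x₁ t := by
  intro t ht
  have hx2t := hx2 t ht
  have hx1t := hx1 t ht
  -- derivative of -1/x₂ = -(x₂)⁻¹
  have h1 : HasDerivAt (fun s => -1 / x₂ s) ((1 - u t) * x₁ t / (x₂ t) ^ 2) t := by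
    have h := ((hx2' t ht).inv hx2t).neg
    have hfun : (fun s => -1 / x₂ s) = fun s => -(x₂ s)⁻¹ := by
      funext s; rw [neg_div, one_div]
    rw [hfun]
    refine h.congr_deriv ?_
    ring
  -- lam2 agrees with -1/x₂ near t
  have heq : lam2 =ᶠ[nhds t] fun s => -1 / x₂ s := by
    filter_upwards [isOpen_Ioo.mem_nhds ht] with s hs using hlam s hs
  have h2 : HasDerivAt lam2 ((1 - u t) * x₁ t / (x₂ t) ^ 2) t := by
    exact h1.congr_of_eventuallyEq heq
  have huniq : 1 / x₂ t = (1 - u t) * x₁ t / (x₂ t) ^ 2 :=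
    (hl2 t ht).unique h2
  have key : (1 - u t) * x₁ t = x₂ t := by
    field_simp at huniq
    exact mul_right_cancel₀ hx2t (by rw [← huniq])
  constructor
  · simpa [key] using hx2' t ht
  · field_simp
    linarith [key]
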